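/- Let Σ = (G, σ) be a signed graph with diameter greater than n whose n-th power is unique. If the n-th power signed graph Σ^n = (G^n, σ′) is distance-compatible, then Σ is distance-compatible. -/

import Mathlib

open SimpleGraph Polynomial

variable {V : Type*}

/-- The sign of a walk: the product of the signs of its edges. -/
def walkSign {G : SimpleGraph V} (sg : V → V → ℤ) {u v : V} (p : G.Walk u v) : ℤ :=
  (p.darts.map fun d => sg d.toProd.1 d.toProd.2).prod

/-- `sigmaMax G sg u v`: the maximum sign over all shortest `u`–`v` paths. -/
noncomputable def sigmaMax (G : SimpleGraph V) (sg : V → V → ℤ) (u v : V) : ℤ := by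
  classical
  exact if ∃ p : G.Walk u v, p.length = G.dist u v ∧ walkSign sg p = 1 then 1 else -1

/-- `sigmaMin G sg u v`: the minimum sign over all shortest `u`–`v` paths. -/
noncomputable def sigmaMin (G : SimpleGraph V) (sg : V → V → ℤ) (u v : V) : ℤ := by
  classical
  exact if ∃ p : G.Walk u v, p.length = G.dist u v ∧ walkSign sg p = -1 then -1 else 1

/-- `u` and `v` are distance-compatible: all shortest `u`–`v` paths have the same sign. -/
def pairCompatible (G : SimpleGraph V) (sg : V → V → ℤ) (u v : V) : Prop :=
  ∀ p q : G.Walk u v, p.length = G.dist u v → q.length = G.dist u v →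
    walkSign sg p = walkSign sg q

/-- The `n`-th power graph: `u ~ v` iff `u ≠ v` and `d(u,v) ≤ n`. -/
def powerGraph (G : SimpleGraph V) (n : ℕ) : SimpleGraph V where
  Adj u v := u ≠ v ∧ G.dist u v ≤ n
  symm := by
    constructor
    intro u v h
    exact ⟨h.1.symm, by rw [SimpleGraph.dist_comm]; exact h.2⟩
  loopless := by
    constructor
    intro u h
    exact h.1 rfl

/-- A signed graph is balanced if every cycle has positive sign. -/
def SBalanced (G : SimpleGraph V) (sg : V → V → ℤ) : Prop :=
  ∀ ⦃u : V⦄ (p : G.Walk u u), p.IsCycle → walkSign sg p = 1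

/-- 2-connectedness: at least 3 vertices and deleting any vertex leaves a connected graph. -/
def TwoConnected [Fintype V] (G : SimpleGraph V) : Prop :=
  3 ≤ Fintype.card V ∧ ∀ v : V, ((⊤ : G.Subgraph).deleteVerts {v}).coe.Connected

/-- Signature of the associated signed complete graph `K^{D^max}(Σ)`:
edges of `G` keep their sign, non-adjacent pairs get `sigmaMax`. -/
noncomputable def kSigMax (G : SimpleGraph V) (sg : V → V → ℤ) (u v : V) : ℤ := by
  classical
  exact if G.Adj u v then sg u v else sigmaMax G sg u v

/-- Signature of the associated signed complete graph `K^{D^min}(Σ)`. -/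
noncomputable def kSigMin (G : SimpleGraph V) (sg : V → V → ℤ) (u v : V) : ℤ := by
  classical
  exact if G.Adj u v then sg u v else sigmaMin G sg u v


lemma walkSign_nil {G : SimpleGraph V} (sg : V → V → ℤ) (u : V) :
    walkSign sg (SimpleGraph.Walk.nil : G.Walk u u) = 1 := rfl

lemma walkSign_cons {G : SimpleGraph V} (sg : V → V → ℤ) {u w v : V} (h : G.Adj u w)
    (q : G.Walk w v) : walkSign sg (SimpleGraph.Walk.cons h q) = sg u w * walkSign sg q := by
  simp [walkSign]

lemma walkSign_pm {G : SimpleGraph V} {sg : V → V → ℤ}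
    (hval : ∀ u v, G.Adj u v → sg u v = 1 ∨ sg u v = -1) {u v : V} (p : G.Walk u v) :
    walkSign sg p = 1 ∨ walkSign sg p = -1 := by
  induction p with
  | nil => left; rfl
  | cons h q ih =>
    rw [walkSign_cons]
    rcases hval _ _ h with h1 | h1 <;> rcases ih with h2 | h2 <;> simp [h1, h2]

lemma sigmaMax_eq_walkSign {G : SimpleGraph V} {sg : V → V → ℤ}
    (hval : ∀ u v, G.Adj u v → sg u v = 1 ∨ sg u v = -1) {n : ℕ}
    (huniq : ∀ u v : V, u ≠ v → G.dist u v ≤ n → pairCompatible G sg u v)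
    {u v : V} (hne : u ≠ v) (hd : G.dist u v ≤ n) (p : G.Walk u v)
    (hp : p.length = G.dist u v) : sigmaMax G sg u v = walkSign sg p := by
  classical
  rcases walkSign_pm hval p with h1 | h1
  · rw [h1, sigmaMax, if_pos ⟨p, hp, h1⟩]
  · rw [h1, sigmaMax, if_neg]
    rintro ⟨q, hq, hq1⟩
    have := huniq u v hne hd q p hq hp
    rw [hq1, h1] at this
    norm_num at this

lemma exists_split {G : SimpleGraph V} (sg : V → V → ℤ) :
    ∀ (k : ℕ) {u v : V} (p : G.Walk u v), k ≤ p.length →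
      ∃ (x : V) (p1 : G.Walk u x) (p2 : G.Walk x v),
        p1.length = k ∧ p2.length = p.length - k ∧
        walkSign sg p = walkSign sg p1 * walkSign sg p2 := by
  intro k
  induction k with
  | zero =>
    intro u v p _
    exact ⟨u, SimpleGraph.Walk.nil, p, rfl, by simp, by rw [walkSign_nil, one_mul]⟩
  | succ k ih =>
    intro u v p hk
    cases p with
    | nil => simp at hk
    | cons h q =>
      rw [SimpleGraph.Walk.length_cons] at hk
      obtain ⟨x, p1, p2, h1, h2, h3⟩ := ih q (by omega)
      refine ⟨x, SimpleGraph.Walk.cons h p1, p2, by simp [h1], by simp [h2], ?_⟩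
      rw [walkSign_cons, walkSign_cons, h3, mul_assoc]

lemma dist_le_of_powerWalk {G : SimpleGraph V} {n : ℕ} (hconn : G.Connected) :
    ∀ {u v : V} (P : (powerGraph G n).Walk u v), G.dist u v ≤ n * P.length := by
  intro u v P
  induction P with
  | nil => simp
  | @cons a b c h Q ih =>
    calc G.dist a c ≤ G.dist a b + G.dist b c := hconn.dist_triangle
    _ ≤ n + n * Q.length := Nat.add_le_add h.2 ih
    _ = n * (SimpleGraph.Walk.cons h Q).length := by
        rw [SimpleGraph.Walk.length_cons, Nat.mul_succ]; ring

lemma exists_powerWalk {G : SimpleGraph V} {sg : V → V → ℤ}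
    (hconn : G.Connected)
    (hval : ∀ u v, G.Adj u v → sg u v = 1 ∨ sg u v = -1) {n : ℕ} (hn : 1 ≤ n)
    (huniq : ∀ u v : V, u ≠ v → G.dist u v ≤ n → pairCompatible G sg u v) :
    ∀ (d : ℕ) {u v : V} (p : G.Walk u v), p.length = d → d = G.dist u v →
      ∃ P : (powerGraph G n).Walk u v,
        walkSign (sigmaMax G sg) P = walkSign sg p ∧ d ≤ n * P.length ∧ n * P.length < d + n := by
  intro d
  induction d using Nat.strong_induction_on with
  | _ d ihd =>
  intro u v p hp hd
  rcases le_or_gt d n with hdn | hdn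
  · by_cases huv : u = v
    · subst huv
      have hd0 : d = 0 := by rw [hd, SimpleGraph.dist_self]
      subst hd0
      have : p = SimpleGraph.Walk.nil := SimpleGraph.Walk.nil_iff_eq_nil.mp (SimpleGraph.Walk.length_eq_zero_iff.mp hp)
      subst this
      exact ⟨SimpleGraph.Walk.nil, by rw [walkSign_nil, walkSign_nil], by simp, by simp; omega⟩
    · have hadj : (powerGraph G n).Adj u v := ⟨huv, hd ▸ hdn⟩
      refine ⟨SimpleGraph.Walk.cons hadj SimpleGraph.Walk.nil, ?_, ?_, ?_⟩
      · rw [walkSign_cons, walkSign_nil, mul_one]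
        exact sigmaMax_eq_walkSign hval huniq huv (hd ▸ hdn) p (hp.trans hd)
      · simpa using hdn
      · have hdpos : 0 < d := by
          rcases Nat.eq_zero_or_pos d with h0 | h0
          · exact absurd (SimpleGraph.Walk.eq_of_length_eq_zero (hp.trans (h0 ▸ rfl))) huv
          · exact h0
        simp only [SimpleGraph.Walk.length_cons, SimpleGraph.Walk.length_nil]
        omega
  · obtain ⟨x, p1, p2, h1, h2, h3⟩ := exists_split sg n p (by omega)
    have hdux : G.dist u x ≤ n := h1 ▸ SimpleGraph.dist_le p1
    have hdxv : G.dist x v ≤ d - n := by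
      have := SimpleGraph.dist_le p2
      omega
    have htri : G.dist u v ≤ G.dist u x + G.dist x v := hconn.dist_triangle
    have heux : G.dist u x = n := by omega
    have hexv : G.dist x v = d - n := by omega
    have hux : u ≠ x := by
      intro h; subst h
      rw [SimpleGraph.dist_self] at heux; omega
    obtain ⟨P2, hP2s, hP2l, hP2u⟩ := ihd (d - n) (by omega) p2 (by omega) hexv.symm
    have hadj : (powerGraph G n).Adj u x := ⟨hux, by omega⟩
    refine ⟨SimpleGraph.Walk.cons hadj P2, ?_, ?_, ?_⟩
    · rw [walkSign_cons, hP2s, h3]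
      congr 1
      exact sigmaMax_eq_walkSign hval huniq hux (by omega) p1 (by omega)
    · rw [SimpleGraph.Walk.length_cons, Nat.mul_succ]; omega
    · rw [SimpleGraph.Walk.length_cons, Nat.mul_succ]; omega

theorem power_compatible_implies_compatible {V : Type*} [Fintype V] (G : SimpleGraph V) (sg : V → V → ℤ)
    (hconn : G.Connected) (hsym : ∀ u v, sg u v = sg v u)
    (hval : ∀ u v, G.Adj u v → sg u v = 1 ∨ sg u v = -1)
    (n : ℕ) (hn : 1 ≤ n) (hdiam : ∃ u v : V, n < G.dist u v)
    (huniq : ∀ u v : V, u ≠ v → G.dist u v ≤ n → pairCompatible G sg u v)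
    (hcomp : ∀ u v : V, pairCompatible (powerGraph G n) (sigmaMax G sg) u v) :
    ∀ u v : V, pairCompatible G sg u v := by
  classical
  intro u v p q hp hq
  obtain ⟨P, hPs, hPl, hPu⟩ :=
    exists_powerWalk hconn hval hn huniq (G.dist u v) p hp rfl
  obtain ⟨Q, hQs, hQl, hQu⟩ :=
    exists_powerWalk hconn hval hn huniq (G.dist u v) q hq rfl
  -- both P and Q have length equal to the power-graph distance
  have key : ∀ (W : (powerGraph G n).Walk u v),
      G.dist u v ≤ n * W.length → n * W.length < G.dist u v + n →
      W.length = (powerGraph G n).dist u v := by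
    intro W hWl hWu
    have hle : (powerGraph G n).dist u v ≤ W.length := SimpleGraph.dist_le W
    have hreach : (powerGraph G n).Reachable u v := ⟨W⟩
    obtain ⟨W', hW'⟩ := hreach.exists_walk_length_eq_dist
    have hW'l : G.dist u v ≤ n * W'.length := dist_le_of_powerWalk hconn W'
    by_contra hne
    have hlt : W'.length < W.length := by omega
    have : n * (W'.length + 1) ≤ n * W.length := Nat.mul_le_mul_left n (by omega)
    rw [Nat.mul_succ] at this
    omega
  have hPd := key P hPl hPu
  have hQd := key Q hQl hQu
  have := hcomp u v P Q hPd hQd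
  rw [hPs, hQs] at this
  exact this
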